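/- arXiv:2009.04981 — 2 statements merged into one kernel-verified Lean document; each statement's English description precedes it below -/
import Mathlib

section
/- Let W be an N×N real matrix with nonnegative entries, positive diagonal entries, row sums equal to 1 (W·1 = 1), and strongly connected digraph (for all i,j there exists m ≥ 1 with (W^m)_{i,j} > 0). Let q be its left Perron–Frobenius eigenvector and Q = diag(q). Then σ̄ := σ_{N−1}(Q^{1/2} W Q^{−1/2}) (the second-largest singular value of Q^{1/2} W Q^{−1/2}) satisfies σ̄ < 1, and for every y ∈ ℝ^N it holds that ‖W(y − 1·qᵀy)‖_Q ≤ σ̄ ‖y − 1·qᵀy‖_Q. -/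
open Matrix

/-- `P`-weighted norm `‖x‖_P = √(xᵀ P x)`. -/
noncomputable def wnorm {ι : Type*} [Fintype ι] (P : Matrix ι ι ℝ) (x : ι → ℝ) : ℝ :=
  Real.sqrt (x ⬝ᵥ P.mulVec x)

/-- The singular values of a real square matrix, sorted in nondecreasing order
`σ₁(A) ≤ … ≤ σ_N(A)`; `sortedSingVals A i` is `σ_{i+1}(A)` (0-based index `i`). -/
noncomputable def sortedSingVals {N : ℕ} (A : Matrix (Fin N) (Fin N) ℝ) : Fin N → ℝ :=
  fun i =>
    Real.sqrt (((Matrix.isHermitian_conjTranspose_mul_self A).eigenvalues ∘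
      Tuple.sort (Matrix.isHermitian_conjTranspose_mul_self A).eigenvalues) i)

/-- Cauchy–Schwarz row inequality: for nonneg weights, `(∑ w z)² ≤ (∑ w) (∑ w z²)`. -/
lemma rowCS {N : ℕ} (w z : Fin N → ℝ) (hw : ∀ j, 0 ≤ w j) :
    (∑ j, w j * z j) ^ 2 ≤ (∑ j, w j) * ∑ j, w j * z j ^ 2 := by
  refine Finset.sum_sq_le_sum_mul_sum_of_sq_eq_mul _ (fun i _ => hw i)
    (fun i _ => mul_nonneg (hw i) (sq_nonneg _)) (fun i _ => ?_)
  ring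

/-- Equality case: if weights sum to 1 and `(∑ w z)² = ∑ w z²`, then `z j = ∑ w z`
wherever `w j > 0`. -/
lemma rowVar {N : ℕ} (w z : Fin N → ℝ) (hw : ∀ j, 0 ≤ w j) (h1 : ∑ j, w j = 1)
    (heq : (∑ j, w j * z j) ^ 2 = ∑ j, w j * z j ^ 2) :
    ∀ j, 0 < w j → z j = ∑ k, w k * z k := by
  set c := ∑ k, w k * z k with hc
  have hzero : ∑ j, w j * (z j - c) ^ 2 = 0 := by
    have h : ∀ j, w j * (z j - c) ^ 2 = w j * z j ^ 2 - 2 * c * (w j * z j) + c ^ 2 * w j := by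
      intro j; ring
    simp_rw [h, Finset.sum_add_distrib, Finset.sum_sub_distrib, ← Finset.mul_sum, ← hc, h1,
      ← heq]
    ring
  intro j hj
  have hterm : ∀ i ∈ Finset.univ, 0 ≤ w i * (z i - c) ^ 2 :=
    fun i _ => mul_nonneg (hw i) (sq_nonneg _)
  have h0 := (Finset.sum_eq_zero_iff_of_nonneg hterm).mp hzero j (Finset.mem_univ j)
  have h2 : (z j - c) ^ 2 = 0 := by
    rcases mul_eq_zero.mp h0 with h | h
    · exact absurd h (ne_of_gt hj)
    · exact h
  have := pow_eq_zero_iff (n := 2) (by norm_num) |>.mp h2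
  linarith

lemma sum_dotProduct' {N : ℕ} (f : Fin N → Fin N → ℝ) (y : Fin N → ℝ) :
    (∑ j, f j) ⬝ᵥ y = ∑ j, f j ⬝ᵥ y := by
  simp only [dotProduct, Finset.sum_apply, Finset.sum_mul]
  exact Finset.sum_comm

lemma mulVec_sum' {N : ℕ} (M : Matrix (Fin N) (Fin N) ℝ) (f : Fin N → Fin N → ℝ) :
    M *ᵥ (∑ j, f j) = ∑ j, M *ᵥ f j := by
  rw [show M *ᵥ (∑ j, f j) = M.mulVecLin (∑ j, f j) from rfl, map_sum]
  rfl

/-- Lemma 1: for a row stochastic, primitive-type matrix `W` with left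
Perron–Frobenius eigenvector `q`, the second largest singular value
`σ̄ = σ_{N-1}(Q^{1/2} W Q^{-1/2})` satisfies `σ̄ < 1` and
`‖W(y - 1 qᵀ y)‖_Q ≤ σ̄ ‖y - 1 qᵀ y‖_Q` for all `y`. -/
theorem stmt0
    (N : ℕ) (hN : 1 < N)
    (W : Matrix (Fin N) (Fin N) ℝ)
    (hWnonneg : ∀ i j, 0 ≤ W i j)
    (hWdiag : ∀ i, 0 < W i i)
    (hWrow : ∀ i, ∑ j, W i j = 1)
    (hWconn : ∀ i j, ∃ m : ℕ, 1 ≤ m ∧ 0 < (W ^ m) i j)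
    (q : Fin N → ℝ)
    (hqpos : ∀ i, 0 < q i)
    (hqW : Matrix.vecMul q W = q)
    (hqsum : ∑ i, q i = 1)
    (Q : Matrix (Fin N) (Fin N) ℝ) (hQ : Q = Matrix.diagonal q)
    (σbar : ℝ)
    (hσbar : σbar = sortedSingVals
      (Matrix.diagonal (fun i => Real.sqrt (q i)) * W *
        Matrix.diagonal (fun i => (Real.sqrt (q i))⁻¹)) ⟨N - 2, by omega⟩) :
    σbar < 1 ∧
      ∀ y : Fin N → ℝ,
        wnorm Q (W.mulVec (y - fun _ => ∑ j, q j * y j)) ≤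
          σbar * wnorm Q (y - fun _ => ∑ j, q j * y j) := by
  have hq0 : ∀ i, (0:ℝ) < Real.sqrt (q i) := fun i => Real.sqrt_pos.2 (hqpos i)
  set D : Matrix (Fin N) (Fin N) ℝ := Matrix.diagonal (fun i => Real.sqrt (q i)) with hD
  set Di : Matrix (Fin N) (Fin N) ℝ := Matrix.diagonal (fun i => (Real.sqrt (q i))⁻¹) with hDi
  set B : Matrix (Fin N) (Fin N) ℝ := D * W * Di with hB
  -- diagonal identities
  have hDDi : D * Di = 1 := by
    rw [hD, hDi, diagonal_mul_diagonal]
    rw [show (fun i => Real.sqrt (q i) * (Real.sqrt (q i))⁻¹) = fun _ => (1:ℝ) from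
      funext fun i => mul_inv_cancel₀ (hq0 i).ne', diagonal_one]
  have hDiD : Di * D = 1 := by
    rw [hD, hDi, diagonal_mul_diagonal]
    rw [show (fun i => (Real.sqrt (q i))⁻¹ * Real.sqrt (q i)) = fun _ => (1:ℝ) from
      funext fun i => inv_mul_cancel₀ (hq0 i).ne', diagonal_one]
  have hBD : B * D = D * W := by
    rw [hB, mul_assoc, hDiD, mul_one]
  have hBmulD : ∀ x : Fin N → ℝ, B *ᵥ (D *ᵥ x) = D *ᵥ (W *ᵥ x) := by
    intro x; rw [mulVec_mulVec, hBD, ← mulVec_mulVec]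
  have hsur : ∀ u : Fin N → ℝ, u = D *ᵥ (Di *ᵥ u) := by
    intro u; rw [mulVec_mulVec, hDDi, one_mulVec]
  have hCT : Bᴴ = Bᵀ := by
    ext i j; simp [conjTranspose_apply]
  have hBH : ∀ u x : Fin N → ℝ, u ⬝ᵥ ((Bᴴ * B) *ᵥ x) = (B *ᵥ u) ⬝ᵥ (B *ᵥ x) := by
    intro u x
    rw [← mulVec_mulVec, dotProduct_mulVec u, hCT, vecMul_transpose]
  have hdotD : ∀ x y : Fin N → ℝ, (D *ᵥ x) ⬝ᵥ (D *ᵥ y) = ∑ i, q i * (x i * y i) := by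
    intro x y
    simp only [dotProduct, hD, mulVec_diagonal]
    refine Finset.sum_congr rfl fun i _ => ?_
    rw [show Real.sqrt (q i) * x i * (Real.sqrt (q i) * y i)
        = Real.sqrt (q i) * Real.sqrt (q i) * (x i * y i) by ring,
      Real.mul_self_sqrt (hqpos i).le]
  have hquadD : ∀ z : Fin N → ℝ,
      (D *ᵥ z) ⬝ᵥ ((Bᴴ * B) *ᵥ (D *ᵥ z)) = ∑ i, q i * ((W *ᵥ z) i) ^ 2 := by
    intro z
    rw [hBH, hBmulD, hdotD]
    exact Finset.sum_congr rfl fun i _ => by ring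
  have hnormD : ∀ z : Fin N → ℝ, (D *ᵥ z) ⬝ᵥ (D *ᵥ z) = ∑ i, q i * (z i) ^ 2 := by
    intro z
    rw [hdotD]
    exact Finset.sum_congr rfl fun i _ => by ring
  have hWapp : ∀ (z : Fin N → ℝ) (i : Fin N), (W *ᵥ z) i = ∑ j, W i j * z j := by
    intro z i; simp [mulVec, dotProduct]
  have hcol : ∀ j, ∑ i, q i * W i j = q j := by
    intro j
    have := congrFun hqW j
    simpa [vecMul, dotProduct] using this
  have hmid : ∀ z : Fin N → ℝ, ∑ i, q i * (∑ j, W i j * (z j) ^ 2) = ∑ j, q j * (z j) ^ 2 := by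
    intro z
    calc ∑ i, q i * (∑ j, W i j * (z j) ^ 2) = ∑ i, ∑ j, q i * W i j * (z j) ^ 2 := by
          refine Finset.sum_congr rfl fun i _ => ?_
          rw [Finset.mul_sum]
          exact Finset.sum_congr rfl fun j _ => by ring
      _ = ∑ j, ∑ i, q i * W i j * (z j) ^ 2 := Finset.sum_comm
      _ = ∑ j, q j * (z j) ^ 2 := by
          refine Finset.sum_congr rfl fun j _ => ?_
          rw [← Finset.sum_mul, hcol]
  have hrowBound : ∀ (z : Fin N → ℝ) (i : Fin N), ((W *ᵥ z) i) ^ 2 ≤ ∑ j, W i j * (z j) ^ 2 := by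
    intro z i
    rw [hWapp]
    have := rowCS (W i) z (hWnonneg i)
    rwa [hWrow i, one_mul] at this
  have hcontr : ∀ z : Fin N → ℝ, ∑ i, q i * ((W *ᵥ z) i) ^ 2 ≤ ∑ i, q i * (z i) ^ 2 := by
    intro z
    calc ∑ i, q i * ((W *ᵥ z) i) ^ 2 ≤ ∑ i, q i * (∑ j, W i j * (z j) ^ 2) :=
          Finset.sum_le_sum fun i _ =>
            mul_le_mul_of_nonneg_left (hrowBound z i) (hqpos i).le
      _ = ∑ i, q i * (z i) ^ 2 := hmid z
  -- rigidity
  have hpow : ∀ (m : ℕ) (i j : Fin N), 0 ≤ (W ^ m) i j := by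
    intro m
    induction m with
    | zero => intro i j; rw [pow_zero]; by_cases h : i = j <;> simp [one_apply, h]
    | succ m ih =>
      intro i j
      rw [pow_succ, mul_apply]
      exact Finset.sum_nonneg fun k _ => mul_nonneg (ih i k) (hWnonneg k j)
  have hrigid : ∀ u : Fin N → ℝ, (Bᴴ * B) *ᵥ u = u →
      ∃ c : ℝ, ∀ i, u i = c * Real.sqrt (q i) := by
    intro u hu
    set z : Fin N → ℝ := Di *ᵥ u with hz
    have hDz : D *ᵥ z = u := (hsur u).symm
    have hq1 : ∑ i, q i * ((W *ᵥ z) i) ^ 2 = ∑ i, q i * (z i) ^ 2 := by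
      have h1 : (D *ᵥ z) ⬝ᵥ ((Bᴴ * B) *ᵥ (D *ᵥ z)) = (D *ᵥ z) ⬝ᵥ (D *ᵥ z) := by
        rw [hDz, hu]
      rwa [hquadD, hnormD] at h1
    have hgap : ∀ i, q i * ((∑ j, W i j * (z j) ^ 2) - ((W *ᵥ z) i) ^ 2) = 0 := by
      have hsum0 : ∑ i, q i * ((∑ j, W i j * (z j) ^ 2) - ((W *ᵥ z) i) ^ 2) = 0 := by
        simp_rw [mul_sub, Finset.sum_sub_distrib]
        rw [hmid z, hq1, sub_self]
      intro i
      refine (Finset.sum_eq_zero_iff_of_nonneg ?_).mp hsum0 i (Finset.mem_univ i)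
      exact fun k _ => mul_nonneg (hqpos k).le (sub_nonneg.2 (hrowBound z k))
    have hgap' : ∀ i, ((W *ᵥ z) i) ^ 2 = ∑ j, W i j * (z j) ^ 2 := by
      intro i
      rcases mul_eq_zero.mp (hgap i) with h | h
      · exact absurd h (hqpos i).ne'
      · linarith [h]
    have hloc : ∀ i j, 0 < W i j → z j = (W *ᵥ z) i := by
      intro i j hij
      have heq2 : (∑ k, W i k * z k) ^ 2 = ∑ k, W i k * (z k) ^ 2 := by
        rw [← hWapp z i]; exact hgap' i
      have := rowVar (W i) z (hWnonneg i) (hWrow i) heq2 j hij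
      rw [this, ← hWapp]
    have hself : ∀ i, z i = (W *ᵥ z) i := fun i => hloc i i (hWdiag i)
    have hstep : ∀ i j, 0 < W i j → z j = z i := fun i j h => (hloc i j h).trans (hself i).symm
    have hconn : ∀ (m : ℕ) (i j : Fin N), 0 < (W ^ m) i j → z j = z i := by
      intro m
      induction m with
      | zero =>
        intro i j h
        rw [pow_zero] at h
        by_cases hij : i = j
        · rw [hij]
        · simp [one_apply, hij] at h
      | succ m ih =>
        intro i j h
        rw [pow_succ, mul_apply] at h
        have hex : ∃ k, 0 < (W ^ m) i k * W k j := by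
          by_contra hcon
          push_neg at hcon
          have : ∑ k, (W ^ m) i k * W k j ≤ 0 := Finset.sum_nonpos fun k _ => hcon k
          linarith
        obtain ⟨k, hk⟩ := hex
        have ha : 0 < (W ^ m) i k := by
          rcases lt_or_eq_of_le (hpow m i k) with h' | h'
          · exact h'
          · rw [← h'] at hk; simp at hk
        have hb : 0 < W k j := by
          rcases lt_or_eq_of_le (hWnonneg k j) with h' | h'
          · exact h'
          · rw [← h'] at hk; simp at hk
        exact (hstep k j hb).trans (ih i k ha)
    have hzc : ∀ i, z i = z ⟨0, by omega⟩ := by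
      intro i
      obtain ⟨m, -, hm⟩ := hWconn ⟨0, by omega⟩ i
      exact hconn m _ i hm
    refine ⟨z ⟨0, by omega⟩, fun i => ?_⟩
    have hui : u i = Real.sqrt (q i) * z i := by
      rw [← hDz, hD, mulVec_diagonal]
    rw [hui, hzc i]; ring
  -- eigen decomposition setup
  have hA : (Bᴴ * B).IsHermitian := Matrix.isHermitian_conjTranspose_mul_self B
  set μ : Fin N → ℝ := hA.eigenvalues with hμdef
  set wv : Fin N → Fin N → ℝ := fun j => ⇑(hA.eigenvectorBasis j) with hwv
  have hAw : ∀ j, (Bᴴ * B) *ᵥ wv j = μ j • wv j := fun j => hA.mulVec_eigenvectorBasis j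
  have hwdot : ∀ i j, wv i ⬝ᵥ wv j = if i = j then 1 else 0 := by
    intro i j
    have := orthonormal_iff_ite.mp hA.eigenvectorBasis.orthonormal i j
    simp [PiLp.inner_apply, dotProduct] at this
    rw [← this]
    show ∑ k, wv i k * wv j k = _
    exact Finset.sum_congr rfl fun k _ => mul_comm _ _
  have hexp : ∀ x : Fin N → ℝ, ∑ j, (wv j ⬝ᵥ x) • wv j = x := by
    intro x
    have h := hA.eigenvectorBasis.sum_repr' (WithLp.toLp 2 x : EuclideanSpace ℝ (Fin N))
    have h2 : ∀ j, inner (𝕜 := ℝ) (hA.eigenvectorBasis j) (WithLp.toLp 2 x : EuclideanSpace ℝ (Fin N))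
        = wv j ⬝ᵥ x := by
      intro j; simp [PiLp.inner_apply, dotProduct, hwv]
      exact Finset.sum_congr rfl fun k _ => mul_comm _ _
    simp_rw [h2] at h
    have h3 := congrArg (WithLp.ofLp (p := 2)) h
    simpa [WithLp.ofLp_sum, WithLp.ofLp_smul, hwv] using h3
  have hdotexp : ∀ x y : Fin N → ℝ, x ⬝ᵥ y = ∑ j, (wv j ⬝ᵥ x) * (wv j ⬝ᵥ y) := by
    intro x y
    conv_lhs => rw [← hexp x]
    rw [sum_dotProduct']
    exact Finset.sum_congr rfl fun j _ => by rw [smul_dotProduct]; simp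
  have hquadexp : ∀ u : Fin N → ℝ,
      u ⬝ᵥ ((Bᴴ * B) *ᵥ u) = ∑ j, μ j * (wv j ⬝ᵥ u) ^ 2 := by
    intro u
    have hstep1 : ∀ j, (Bᴴ * B) *ᵥ ((wv j ⬝ᵥ u) • wv j) = ((wv j ⬝ᵥ u) * μ j) • wv j := by
      intro j
      rw [mulVec_smul, hAw j, smul_smul]
    calc u ⬝ᵥ ((Bᴴ * B) *ᵥ u)
        = u ⬝ᵥ ((Bᴴ * B) *ᵥ (∑ j, (wv j ⬝ᵥ u) • wv j)) := by rw [hexp]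
      _ = u ⬝ᵥ (∑ j, ((wv j ⬝ᵥ u) * μ j) • wv j) := by
          rw [mulVec_sum']
          simp_rw [hstep1]
      _ = (∑ j, ((wv j ⬝ᵥ u) * μ j) • wv j) ⬝ᵥ u := dotProduct_comm _ _
      _ = ∑ j, μ j * (wv j ⬝ᵥ u) ^ 2 := by
          rw [sum_dotProduct']
          refine Finset.sum_congr rfl fun j _ => ?_
          rw [smul_dotProduct, smul_eq_mul]
          ring
  have hdecomp : ∀ u : Fin N → ℝ, u ⬝ᵥ u = ∑ j, (wv j ⬝ᵥ u) ^ 2 := by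
    intro u
    rw [hdotexp u u]
    exact Finset.sum_congr rfl fun j _ => by ring
  -- quadratic form bounds
  have hquad_le : ∀ u : Fin N → ℝ, u ⬝ᵥ ((Bᴴ * B) *ᵥ u) ≤ u ⬝ᵥ u := by
    intro u
    have h1 := hquadD (Di *ᵥ u)
    have h2 := hnormD (Di *ᵥ u)
    rw [← hsur u] at h1 h2
    rw [h1, h2]
    exact hcontr _
  have hquad_nonneg : ∀ u : Fin N → ℝ, 0 ≤ u ⬝ᵥ ((Bᴴ * B) *ᵥ u) := by
    intro u
    have h1 := hquadD (Di *ᵥ u)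
    rw [← hsur u] at h1
    rw [h1]
    exact Finset.sum_nonneg fun i _ => mul_nonneg (hqpos i).le (sq_nonneg _)
  have hw1 : ∀ j, wv j ⬝ᵥ wv j = 1 := fun j => by rw [hwdot]; simp
  have hμval : ∀ j, wv j ⬝ᵥ ((Bᴴ * B) *ᵥ wv j) = μ j := by
    intro j
    rw [hAw j, dotProduct_smul, hw1]
    simp
  have hμ_nonneg : ∀ j, 0 ≤ μ j := fun j => by rw [← hμval j]; exact hquad_nonneg _
  have hμ_le1 : ∀ j, μ j ≤ 1 := fun j => by
    have := hquad_le (wv j); rwa [hμval, hw1] at this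
  -- the Perron vector v = √q
  set v : Fin N → ℝ := fun i => Real.sqrt (q i) with hv
  have hWone : W *ᵥ (fun _ => (1:ℝ)) = fun _ => (1:ℝ) := by
    funext i; rw [hWapp]; simp [hWrow i]
  have hDv : D *ᵥ (fun _ => (1:ℝ)) = v := by
    funext i; rw [hD, mulVec_diagonal]; simp [hv]
  have hBv : B *ᵥ v = v := by
    rw [← hDv, hBmulD, hWone]
  have hvD : v ᵥ* D = q := by
    funext j; rw [hD, vecMul_diagonal, hv]
    exact Real.mul_self_sqrt (hqpos j).le
  have hqDi : q ᵥ* Di = v := by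
    funext j; rw [hDi, vecMul_diagonal, hv]
    rw [show q j = Real.sqrt (q j) * Real.sqrt (q j) from (Real.mul_self_sqrt (hqpos j).le).symm]
    field_simp
    rw [Real.sqrt_sq (Real.sqrt_nonneg _), pow_two, mul_div_assoc, div_self (hq0 j).ne', mul_one]
  have hvB : v ᵥ* B = v := by
    rw [hB, ← vecMul_vecMul, ← vecMul_vecMul, hvD, hqW, hqDi]
  have hBHv : Bᴴ *ᵥ v = v := by
    rw [hCT, mulVec_transpose, hvB]
  have hAv : (Bᴴ * B) *ᵥ v = v := by
    rw [← mulVec_mulVec, hBv, hBHv]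
  have hvv : v ⬝ᵥ v = 1 := by
    rw [show v ⬝ᵥ v = ∑ i, q i from Finset.sum_congr rfl fun i _ =>
      Real.mul_self_sqrt (hqpos i).le, hqsum]
  -- symmetry: wⱼ ⬝ᵥ (A x) = μⱼ (wⱼ ⬝ᵥ x)
  have hAt : (Bᴴ * B)ᵀ = Bᴴ * B := by
    have h := hA
    rw [Matrix.IsHermitian] at h
    calc (Bᴴ * B)ᵀ = (Bᴴ * B)ᴴ := by ext i j; simp [conjTranspose_apply, transpose_apply]
      _ = Bᴴ * B := h
  have hsymdot : ∀ (j : Fin N) (x : Fin N → ℝ),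
      wv j ⬝ᵥ ((Bᴴ * B) *ᵥ x) = μ j * (wv j ⬝ᵥ x) := by
    intro j x
    rw [dotProduct_mulVec]
    have hvm : wv j ᵥ* (Bᴴ * B) = μ j • wv j := by
      calc wv j ᵥ* (Bᴴ * B) = (Bᴴ * B)ᵀ *ᵥ wv j := (mulVec_transpose _ _).symm
        _ = (Bᴴ * B) *ᵥ wv j := by rw [hAt]
        _ = μ j • wv j := hAw j
    rw [hvm, smul_dotProduct]
    simp
  have hfix : ∀ j, (μ j - 1) * (wv j ⬝ᵥ v) = 0 := by
    intro j
    have h := hsymdot j v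
    rw [hAv] at h
    linear_combination -h
  have hexists1 : ∃ j, μ j = 1 ∧ wv j ⬝ᵥ v ≠ 0 := by
    by_contra hcon
    push_neg at hcon
    have hall : ∀ j, wv j ⬝ᵥ v = 0 := by
      intro j
      by_cases h1 : μ j = 1
      · exact hcon j h1
      · rcases mul_eq_zero.mp (hfix j) with h | h
        · exact absurd (by linarith) h1
        · exact h
    have h0 : v ⬝ᵥ v = 0 := by
      rw [hdecomp v]
      simp [hall]
    rw [hvv] at h0
    norm_num at h0
  -- sorted eigenvalue facts
  have hmono : Monotone (μ ∘ Tuple.sort μ) := Tuple.monotone_sort μ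
  set ia : Fin N := ⟨N - 2, by omega⟩ with hia
  set ib : Fin N := ⟨N - 1, by omega⟩ with hib
  set m : ℝ := μ (Tuple.sort μ ia) with hm
  have hcover : ∀ j, μ j ≤ m ∨ j = Tuple.sort μ ib := by
    intro j
    set k := (Tuple.sort μ).symm j with hk
    have hj : Tuple.sort μ k = j := Equiv.apply_symm_apply _ j
    by_cases hkle : (k : ℕ) ≤ N - 2
    · left
      have hkia : k ≤ ia := by
        rw [hia]; exact hkle
      have := hmono hkia
      simpa [Function.comp, hj] using this
    · right
      have hkval : (k : ℕ) = N - 1 := by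
        have := k.isLt; omega
      have : k = ib := by rw [hib]; exact Fin.ext hkval
      rw [← hj, this]
  have hm0 : (0:ℝ) ≤ m := hμ_nonneg _
  have hm1 : m < 1 := by
    by_contra hcon
    push_neg at hcon
    have hμa : μ (Tuple.sort μ ia) = 1 := le_antisymm (hμ_le1 _) hcon
    have hab : ia ≤ ib := by
      rw [hia, hib]
      show (N - 2 : ℕ) ≤ N - 1
      omega
    have hμb : μ (Tuple.sort μ ib) = 1 := by
      refine le_antisymm (hμ_le1 _) ?_
      have := hmono hab
      simp only [Function.comp] at this
      calc (1:ℝ) ≤ m := hcon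
        _ ≤ μ (Tuple.sort μ ib) := this
    have hwa : (Bᴴ * B) *ᵥ wv (Tuple.sort μ ia) = wv (Tuple.sort μ ia) := by
      rw [hAw, hμa, one_smul]
    have hwb : (Bᴴ * B) *ᵥ wv (Tuple.sort μ ib) = wv (Tuple.sort μ ib) := by
      rw [hAw, hμb, one_smul]
    obtain ⟨ca, hca⟩ := hrigid _ hwa
    obtain ⟨cb, hcb⟩ := hrigid _ hwb
    have hne : Tuple.sort μ ia ≠ Tuple.sort μ ib := by
      intro h
      have h2 := (Tuple.sort μ).injective h
      have h3 : (N - 2 : ℕ) = N - 1 := by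
        have := congrArg Fin.val h2
        simpa [hia, hib] using this
      omega
    have hdot0 : wv (Tuple.sort μ ia) ⬝ᵥ wv (Tuple.sort μ ib) = 0 := by
      rw [hwdot]; simp [hne]
    have hdotab : wv (Tuple.sort μ ia) ⬝ᵥ wv (Tuple.sort μ ib) = ca * cb := by
      calc wv (Tuple.sort μ ia) ⬝ᵥ wv (Tuple.sort μ ib)
          = ∑ i, ca * cb * q i := by
            simp only [dotProduct]
            refine Finset.sum_congr rfl fun i _ => ?_
            rw [hca i, hcb i,
              show ca * Real.sqrt (q i) * (cb * Real.sqrt (q i))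
                = ca * cb * (Real.sqrt (q i) * Real.sqrt (q i)) by ring,
              Real.mul_self_sqrt (hqpos i).le]
        _ = ca * cb := by rw [← Finset.mul_sum, hqsum, mul_one]
    have hdotaa : wv (Tuple.sort μ ia) ⬝ᵥ wv (Tuple.sort μ ia) = ca * ca := by
      calc wv (Tuple.sort μ ia) ⬝ᵥ wv (Tuple.sort μ ia)
          = ∑ i, ca * ca * q i := by
            simp only [dotProduct]
            refine Finset.sum_congr rfl fun i _ => ?_
            rw [hca i,
              show ca * Real.sqrt (q i) * (ca * Real.sqrt (q i))
                = ca * ca * (Real.sqrt (q i) * Real.sqrt (q i)) by ring,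
              Real.mul_self_sqrt (hqpos i).le]
        _ = ca * ca := by rw [← Finset.mul_sum, hqsum, mul_one]
    have hdotbb : wv (Tuple.sort μ ib) ⬝ᵥ wv (Tuple.sort μ ib) = cb * cb := by
      calc wv (Tuple.sort μ ib) ⬝ᵥ wv (Tuple.sort μ ib)
          = ∑ i, cb * cb * q i := by
            simp only [dotProduct]
            refine Finset.sum_congr rfl fun i _ => ?_
            rw [hcb i,
              show cb * Real.sqrt (q i) * (cb * Real.sqrt (q i))
                = cb * cb * (Real.sqrt (q i) * Real.sqrt (q i)) by ring,
              Real.mul_self_sqrt (hqpos i).le]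
        _ = cb * cb := by rw [← Finset.mul_sum, hqsum, mul_one]
    have h1a := hw1 (Tuple.sort μ ia)
    have h1b := hw1 (Tuple.sort μ ib)
    rw [hdotaa] at h1a
    rw [hdotbb] at h1b
    rw [hdot0] at hdotab
    nlinarith [hdotab, h1a, h1b]
  -- the key inequality
  have hkey : ∀ u : Fin N → ℝ, v ⬝ᵥ u = 0 →
      u ⬝ᵥ ((Bᴴ * B) *ᵥ u) ≤ m * (u ⬝ᵥ u) := by
    intro u hvu
    rw [hquadexp, hdecomp, Finset.mul_sum]
    refine Finset.sum_le_sum fun j _ => ?_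
    by_cases hjm : μ j ≤ m
    · exact mul_le_mul_of_nonneg_right hjm (sq_nonneg _)
    · have hjt : j = Tuple.sort μ ib := (hcover j).resolve_left hjm
      obtain ⟨j0, hj01, hj0v⟩ := hexists1
      have hj0t : j0 = Tuple.sort μ ib := by
        refine (hcover j0).resolve_left ?_
        rw [hj01]
        exact not_le.mpr hm1
      have hμj : μ j = 1 := by
        rw [hjt, ← hj0t, hj01]
      have hwt : (Bᴴ * B) *ᵥ wv j = wv j := by
        rw [hAw, hμj, one_smul]
      obtain ⟨c, hc⟩ := hrigid _ hwt
      have hcdot : wv j ⬝ᵥ u = c * (v ⬝ᵥ u) := by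
        simp only [dotProduct, Finset.mul_sum]
        refine Finset.sum_congr rfl fun i _ => ?_
        rw [hc i, hv]
        ring
      rw [hcdot, hvu, mul_zero]
      simp
  -- conclusion
  have hσm : σbar = Real.sqrt m := hσbar
  constructor
  · rw [hσm]
    calc Real.sqrt m < Real.sqrt 1 := Real.sqrt_lt_sqrt hm0 hm1
      _ = 1 := Real.sqrt_one
  · intro y
    set z0 : Fin N → ℝ := y - (fun _ => ∑ j, q j * y j) with hz0
    have hqz : ∑ i, q i * z0 i = 0 := by
      simp only [hz0, Pi.sub_apply]
      simp_rw [mul_sub, Finset.sum_sub_distrib, ← Finset.sum_mul]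
      rw [hqsum, one_mul, sub_self]
    have hvu : v ⬝ᵥ (D *ᵥ z0) = 0 := by
      rw [show v ⬝ᵥ (D *ᵥ z0) = ∑ i, q i * z0 i from ?_, hqz]
      simp only [dotProduct, hD, mulVec_diagonal]
      refine Finset.sum_congr rfl fun i _ => ?_
      rw [hv, show Real.sqrt (q i) * (Real.sqrt (q i) * z0 i)
        = Real.sqrt (q i) * Real.sqrt (q i) * z0 i by ring, Real.mul_self_sqrt (hqpos i).le]
    have hk := hkey (D *ᵥ z0) hvu
    rw [hquadD, hnormD] at hk
    have hwn : ∀ x : Fin N → ℝ, wnorm Q x = Real.sqrt (∑ i, q i * (x i) ^ 2) := by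
      intro x
      rw [wnorm, hQ]
      congr 1
      simp only [dotProduct, mulVec_diagonal]
      exact Finset.sum_congr rfl fun i _ => by ring
    rw [hσm, hwn, hwn, ← Real.sqrt_mul hm0]
    exact Real.sqrt_le_sqrt hk
end

section
/- Let W be an N×N real matrix and q ∈ ℝ^N a vector with positive entries satisfying qᵀW = qᵀ and 1ᵀq = 1; let Q = diag(q) and p ∈ ℝ^N the vector with entries p_i = √(q_i). Then the squared Q-induced operator norm of W − 1·qᵀ equals the largest eigenvalue of the symmetric matrix M − p·pᵀ, where M = Q^{−1/2} Wᵀ Q W Q^{−1/2}; that is, ‖W − 1qᵀ‖_Q² = λ_max(Q^{−1/2} Wᵀ Q W Q^{−1/2} − ppᵀ). -/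
open Matrix

/-- The `P`-induced operator norm `‖A‖_P = sup_{x ≠ 0} ‖Ax‖_P / ‖x‖_P`. -/
noncomputable def opnorm {ι : Type*} [Fintype ι] (P A : Matrix ι ι ℝ) : ℝ :=
  sSup {r : ℝ | ∃ x : ι → ℝ, x ≠ 0 ∧ r = wnorm P (A.mulVec x) / wnorm P x}

/-- Largest eigenvalue of a (hermitian) real matrix. -/
noncomputable def eigMax {N : ℕ} (A : Matrix (Fin N) (Fin N) ℝ) : ℝ :=
  if hA : A.IsHermitian then ⨆ i, hA.eigenvalues i else 0

section Aux

variable {n : Type*} [Fintype n] [DecidableEq n]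

lemma aux_mul_vecMulVec (M : Matrix n n ℝ) (u v : n → ℝ) :
    M * vecMulVec u v = vecMulVec (M *ᵥ u) v := by
  ext i j
  simp [mul_apply, vecMulVec_apply, mulVec, dotProduct, Finset.sum_mul, mul_assoc]

lemma aux_vecMulVec_mul (M : Matrix n n ℝ) (u v : n → ℝ) :
    vecMulVec u v * M = vecMulVec u (v ᵥ* M) := by
  ext i j
  simp [mul_apply, vecMulVec_apply, vecMul, dotProduct, Finset.mul_sum, mul_assoc,
    mul_left_comm, mul_comm]

lemma aux_vecMulVec_transpose (u v : n → ℝ) : (vecMulVec u v)ᵀ = vecMulVec v u := by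
  ext i j; simp [vecMulVec_apply, mul_comm]

lemma aux_conj_dot (M C : Matrix n n ℝ) (x y : n → ℝ) :
    x ⬝ᵥ (Mᵀ * C * M) *ᵥ y = (M *ᵥ x) ⬝ᵥ C *ᵥ (M *ᵥ y) := by
  rw [Matrix.mul_assoc, ← Matrix.mulVec_mulVec, ← Matrix.mulVec_mulVec,
    Matrix.dotProduct_mulVec, Matrix.vecMul_transpose]

lemma aux_diag_decomp {B U : Matrix n n ℝ} {d : n → ℝ}
    (hB : B = U * diagonal d * Uᵀ) (y : n → ℝ) :
    y ⬝ᵥ B *ᵥ y = ∑ i, d i * (Uᵀ *ᵥ y) i ^ 2 := by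
  have h : B = Uᵀᵀ * diagonal d * Uᵀ := by rw [transpose_transpose]; exact hB
  rw [h, aux_conj_dot]
  simp only [dotProduct, mulVec_diagonal]
  exact Finset.sum_congr rfl fun i _ => by ring

lemma aux_diag_decomp_self {U : Matrix n n ℝ} (hU : U * Uᵀ = 1) (y : n → ℝ) :
    y ⬝ᵥ y = ∑ i, (Uᵀ *ᵥ y) i ^ 2 := by
  have h : (1 : Matrix n n ℝ) = Uᵀᵀ * 1 * Uᵀ := by
    rw [transpose_transpose, Matrix.mul_one, hU]
  calc y ⬝ᵥ y = y ⬝ᵥ (1 : Matrix n n ℝ) *ᵥ y := by rw [Matrix.one_mulVec]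
    _ = ∑ i, (Uᵀ *ᵥ y) i ^ 2 := by rw [h, aux_conj_dot]; simp [dotProduct, sq]

lemma aux_real_spectral (B : Matrix n n ℝ) (hB : B.IsHermitian) :
    B = (hB.eigenvectorUnitary : Matrix n n ℝ) * diagonal hB.eigenvalues *
      (hB.eigenvectorUnitary : Matrix n n ℝ)ᵀ := by
  have h := hB.spectral_theorem
  have hst : star (hB.eigenvectorUnitary : Matrix n n ℝ)
      = (hB.eigenvectorUnitary : Matrix n n ℝ)ᵀ := by
    ext i j; simp [Matrix.star_eq_conjTranspose, Matrix.conjTranspose_apply]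
  rw [Unitary.conjStarAlgAut_apply, hst] at h
  simpa using h

lemma aux_real_unitary (B : Matrix n n ℝ) (hB : B.IsHermitian) :
    (hB.eigenvectorUnitary : Matrix n n ℝ) * (hB.eigenvectorUnitary : Matrix n n ℝ)ᵀ = 1 := by
  have hst : star (hB.eigenvectorUnitary : Matrix n n ℝ)
      = (hB.eigenvectorUnitary : Matrix n n ℝ)ᵀ := by
    ext i j; simp [Matrix.star_eq_conjTranspose, Matrix.conjTranspose_apply]
  rw [← hst]
  exact (Matrix.mem_unitaryGroup_iff).mp hB.eigenvectorUnitary.2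

/-- Rayleigh upper bound. -/
lemma aux_rayleigh_le {N : ℕ} (B : Matrix (Fin N) (Fin N) ℝ) (hB : B.IsHermitian)
    (y : Fin N → ℝ) :
    y ⬝ᵥ B *ᵥ y ≤ (⨆ i, hB.eigenvalues i) * (y ⬝ᵥ y) := by
  rcases Nat.eq_zero_or_pos N with h0 | hN
  · subst h0
    simp [dotProduct, Real.iSup_of_isEmpty]
  · have : Nonempty (Fin N) := ⟨⟨0, hN⟩⟩
    rw [aux_diag_decomp (aux_real_spectral B hB) y,
      aux_diag_decomp_self (aux_real_unitary B hB) y, Finset.mul_sum]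
    refine Finset.sum_le_sum fun i _ => ?_
    exact mul_le_mul_of_nonneg_right (le_ciSup (Finite.bddAbove_range _) i) (sq_nonneg _)

/-- Rayleigh attainment. -/
lemma aux_rayleigh_attain {N : ℕ} (hN : 0 < N) (B : Matrix (Fin N) (Fin N) ℝ)
    (hB : B.IsHermitian) :
    ∃ v : Fin N → ℝ, v ≠ 0 ∧ v ⬝ᵥ B *ᵥ v = (⨆ i, hB.eigenvalues i) * (v ⬝ᵥ v) := by
  have : Nonempty (Fin N) := ⟨⟨0, hN⟩⟩
  obtain ⟨i, hi⟩ : ∃ i, hB.eigenvalues i = ⨆ j, hB.eigenvalues j := exists_eq_ciSup_of_finite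
  refine ⟨⇑(hB.eigenvectorBasis i), ?_, ?_⟩
  · intro h
    apply hB.eigenvectorBasis.orthonormal.ne_zero i
    ext j
    exact congrFun h j
  · rw [hB.mulVec_eigenvectorBasis i, dotProduct_smul, hi]
    rfl

end Aux

/-- `‖W - 1qᵀ‖_Q² = λ_max(Q^{-1/2} Wᵀ Q W Q^{-1/2} - ppᵀ)`, where
`p_i = √(q_i)`. -/
theorem stmt1
    (N : ℕ)
    (W : Matrix (Fin N) (Fin N) ℝ)
    (q : Fin N → ℝ)
    (hqpos : ∀ i, 0 < q i)
    (hqW : Matrix.vecMul q W = q)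
    (hqsum : ∑ i, q i = 1)
    (Q : Matrix (Fin N) (Fin N) ℝ) (hQ : Q = Matrix.diagonal q)
    (p : Fin N → ℝ) (hp : p = fun i => Real.sqrt (q i)) :
    (opnorm Q (W - Matrix.vecMulVec (fun _ => (1 : ℝ)) q)) ^ 2 =
      eigMax
        (Matrix.diagonal (fun i => (Real.sqrt (q i))⁻¹) * Wᵀ * Q * W *
            Matrix.diagonal (fun i => (Real.sqrt (q i))⁻¹) -
          Matrix.vecMulVec p p) := by
  subst hQ hp
  set s : Fin N → ℝ := fun i => Real.sqrt (q i) with hs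
  have hspos : ∀ i, 0 < s i := fun i => Real.sqrt_pos.2 (hqpos i)
  set S : Matrix (Fin N) (Fin N) ℝ := Matrix.diagonal s with hSdef
  set R : Matrix (Fin N) (Fin N) ℝ := Matrix.diagonal (fun i => (s i)⁻¹) with hRdef
  set A : Matrix (Fin N) (Fin N) ℝ := W - Matrix.vecMulVec (fun _ => (1 : ℝ)) q with hAdef
  set B : Matrix (Fin N) (Fin N) ℝ :=
    R * Wᵀ * Matrix.diagonal q * W * R - Matrix.vecMulVec s s with hBdef
  -- basic diagonal facts
  have hdiag : ∀ d e : Fin N → ℝ, (∀ i, d i = e i) →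
      Matrix.diagonal d = Matrix.diagonal e := fun d e h => by rw [funext h]
  have hSR : S * R = 1 := by
    rw [hSdef, hRdef, diagonal_mul_diagonal,
      hdiag _ (fun _ => (1:ℝ)) (fun i => mul_inv_cancel₀ (hspos i).ne'), diagonal_one]
  have hRS : R * S = 1 := by
    rw [hSdef, hRdef, diagonal_mul_diagonal,
      hdiag _ (fun _ => (1:ℝ)) (fun i => inv_mul_cancel₀ (hspos i).ne'), diagonal_one]
  have hSS : S * S = Matrix.diagonal q := by
    rw [hSdef, diagonal_mul_diagonal,
      hdiag _ q (fun i => Real.mul_self_sqrt (hqpos i).le)]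
  have hSsymm : Sᵀ = S := diagonal_transpose s
  -- q as various vec products
  have hq1 : (fun _ => (1:ℝ)) ᵥ* Matrix.diagonal q = q := by
    funext i; rw [vecMul_diagonal]; exact one_mul _
  have hQ1 : Matrix.diagonal q *ᵥ (fun _ => (1:ℝ)) = q := by
    funext i; rw [mulVec_diagonal]; exact mul_one _
  have hWq : Wᵀ *ᵥ q = q := by rw [Matrix.mulVec_transpose, hqW]
  -- A^T Q A = W^T Q W - q q^T
  have hAQA : Aᵀ * Matrix.diagonal q * A
      = Wᵀ * Matrix.diagonal q * W - Matrix.vecMulVec q q := by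
    have hAT : Aᵀ = Wᵀ - Matrix.vecMulVec q (fun _ => (1:ℝ)) := by
      rw [hAdef, transpose_sub, aux_vecMulVec_transpose]
    rw [hAT, hAdef]
    rw [Matrix.sub_mul, Matrix.sub_mul, Matrix.mul_sub, Matrix.mul_sub]
    have h1 : Wᵀ * Matrix.diagonal q * Matrix.vecMulVec (fun _ => (1:ℝ)) q
        = Matrix.vecMulVec q q := by
      rw [aux_mul_vecMulVec, ← Matrix.mulVec_mulVec, hQ1, hWq]
    have h2 : Matrix.vecMulVec q (fun _ => (1:ℝ)) * Matrix.diagonal q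
        = Matrix.vecMulVec q q := by
      rw [aux_vecMulVec_mul, hq1]
    have h3 : Matrix.vecMulVec q q * W = Matrix.vecMulVec q q := by
      rw [aux_vecMulVec_mul, hqW]
    have h4 : Matrix.vecMulVec q q * Matrix.vecMulVec (fun _ => (1:ℝ)) q
        = Matrix.vecMulVec q q := by
      have hqq : (Matrix.vecMulVec q q *ᵥ fun _ => (1:ℝ)) = q := by
        funext i
        simp only [Matrix.mulVec, dotProduct, vecMulVec_apply, mul_one]
        rw [← Finset.mul_sum, hqsum, mul_one]
      rw [aux_mul_vecMulVec, hqq]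
    rw [h1, h2, h3, h4]
    abel
  -- S B S = A^T Q A
  have hSp : S *ᵥ s = q := by
    funext i
    simp [hSdef, mulVec_diagonal, hs, Real.mul_self_sqrt (hqpos i).le]
  have hpS : s ᵥ* S = q := by
    funext i
    simp [hSdef, vecMul_diagonal, hs, Real.mul_self_sqrt (hqpos i).le]
  have hSBS : S * B * S = Aᵀ * Matrix.diagonal q * A := by
    rw [hBdef, Matrix.mul_sub, Matrix.sub_mul, hAQA]
    congr 1
    · calc S * (R * Wᵀ * Matrix.diagonal q * W * R) * S
          = (S * R) * (Wᵀ * Matrix.diagonal q * W) * (R * S) := by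
            simp only [Matrix.mul_assoc]
        _ = Wᵀ * Matrix.diagonal q * W := by
            rw [hSR, hRS, Matrix.one_mul, Matrix.mul_one]
    · rw [aux_mul_vecMulVec, aux_vecMulVec_mul, hSp, hpS]
  -- B is hermitian
  have hBH : B.IsHermitian := by
    have hT : Bᵀ = B := by
      rw [hBdef]
      rw [transpose_sub, aux_vecMulVec_transpose]
      congr 1
      calc (R * Wᵀ * Matrix.diagonal q * W * R)ᵀ
          = Rᵀ * (Wᵀ * (Matrix.diagonal q)ᵀ * (Wᵀᵀ * Rᵀ)) := by
            simp only [transpose_mul, transpose_transpose, Matrix.mul_assoc]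
        _ = R * Wᵀ * Matrix.diagonal q * W * R := by
            rw [diagonal_transpose, transpose_transpose, hRdef, diagonal_transpose]
            simp only [Matrix.mul_assoc]
    show Bᴴ = B
    have : Bᴴ = Bᵀ := by ext i j; simp [conjTranspose_apply]
    rw [this, hT]
  -- change of variables identities
  have key1 : ∀ x : Fin N → ℝ,
      (S *ᵥ x) ⬝ᵥ B *ᵥ (S *ᵥ x) = (A *ᵥ x) ⬝ᵥ (Matrix.diagonal q) *ᵥ (A *ᵥ x) := by
    intro x
    have l1 := aux_conj_dot S B x x
    have l2 := aux_conj_dot A (Matrix.diagonal q) x x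
    rw [hSsymm] at l1
    rw [← l1, ← l2, hSBS]
  have key2 : ∀ x : Fin N → ℝ,
      (S *ᵥ x) ⬝ᵥ (S *ᵥ x) = x ⬝ᵥ (Matrix.diagonal q) *ᵥ x := by
    intro x
    have l1 := aux_conj_dot S 1 x x
    rw [hSsymm, Matrix.mul_one, hSS] at l1
    rw [l1, Matrix.one_mulVec]
  have hSne : ∀ x : Fin N → ℝ, x ≠ 0 → S *ᵥ x ≠ 0 := by
    intro x hx h
    apply hx
    have : R *ᵥ (S *ᵥ x) = x := by rw [Matrix.mulVec_mulVec, hRS, Matrix.one_mulVec]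
    rw [h, Matrix.mulVec_zero] at this
    exact this.symm
  -- positive semidefiniteness of B
  have hQpsd : ∀ w : Fin N → ℝ, 0 ≤ w ⬝ᵥ (Matrix.diagonal q) *ᵥ w := by
    intro w
    simp only [dotProduct, mulVec_diagonal]
    refine Finset.sum_nonneg fun i _ => ?_
    have : w i * (q i * w i) = q i * (w i)^2 := by ring
    rw [this]
    exact mul_nonneg (hqpos i).le (sq_nonneg _)
  have hBpsd : ∀ y : Fin N → ℝ, 0 ≤ y ⬝ᵥ B *ᵥ y := by
    intro y
    have hy : y = S *ᵥ (R *ᵥ y) := by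
      rw [Matrix.mulVec_mulVec, hSR, Matrix.one_mulVec]
    calc (0:ℝ) ≤ (A *ᵥ (R *ᵥ y)) ⬝ᵥ (Matrix.diagonal q) *ᵥ (A *ᵥ (R *ᵥ y)) := hQpsd _
      _ = (S *ᵥ (R *ᵥ y)) ⬝ᵥ B *ᵥ (S *ᵥ (R *ᵥ y)) := (key1 _).symm
      _ = y ⬝ᵥ B *ᵥ y := by rw [← hy]
  -- the two sides
  have heig : eigMax B = ⨆ i, hBH.eigenvalues i := by
    rw [eigMax, dif_pos hBH]
  rcases Nat.eq_zero_or_pos N with h0 | hN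
  · -- N = 0
    subst h0
    have hset : {r : ℝ | ∃ x : Fin 0 → ℝ, x ≠ 0 ∧
        r = wnorm (Matrix.diagonal q) (A.mulVec x) / wnorm (Matrix.diagonal q) x} = ∅ := by
      ext r
      simp only [Set.mem_setOf_eq, Set.mem_empty_iff_false, iff_false, not_exists]
      intro x hx
      exact absurd (Subsingleton.elim x 0) hx.1
    rw [opnorm, hset, Real.sSup_empty, heig, Real.iSup_of_isEmpty]
    norm_num
  · -- N > 0
    have : Nonempty (Fin N) := ⟨⟨0, hN⟩⟩
    set lam : ℝ := ⨆ i, hBH.eigenvalues i with hlam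
    have hdot : ∀ y : Fin N → ℝ, y ≠ 0 → 0 < y ⬝ᵥ y := by
      intro y hy
      have h1 : 0 ≤ y ⬝ᵥ y := Finset.sum_nonneg fun i _ => mul_self_nonneg (y i)
      rcases h1.lt_or_eq with h | h
      · exact h
      · exact absurd (dotProduct_self_eq_zero.mp h.symm) hy
    obtain ⟨v, hv0, hvB⟩ := aux_rayleigh_attain hN B hBH
    rw [← hlam] at hvB
    have hvv : 0 < v ⬝ᵥ v := hdot v hv0
    have hlam0 : 0 ≤ lam := by
      have h := hBpsd v
      rw [hvB, mul_comm] at h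
      exact nonneg_of_mul_nonneg_right h hvv
    have hgreat : IsGreatest {r : ℝ | ∃ x : Fin N → ℝ, x ≠ 0 ∧
        r = wnorm (Matrix.diagonal q) (A.mulVec x) / wnorm (Matrix.diagonal q) x}
        (Real.sqrt lam) := by
      constructor
      · -- membership: x = R *ᵥ v
        refine ⟨R *ᵥ v, ?_, ?_⟩
        · intro h
          apply hv0
          have : S *ᵥ (R *ᵥ v) = v := by
            rw [Matrix.mulVec_mulVec, hSR, Matrix.one_mulVec]
          rw [h, Matrix.mulVec_zero] at this
          exact this.symm
        · have hSv : S *ᵥ (R *ᵥ v) = v := by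
            rw [Matrix.mulVec_mulVec, hSR, Matrix.one_mulVec]
          rw [wnorm, wnorm, ← key1, ← key2, hSv, hvB,
            Real.sqrt_mul hlam0, mul_div_assoc,
            div_self (by positivity : Real.sqrt (v ⬝ᵥ v) ≠ 0), mul_one]
      · -- upper bound
        rintro r ⟨x, hx, rfl⟩
        set y : Fin N → ℝ := S *ᵥ x with hy
        have hyne : y ≠ 0 := hSne x hx
        have hyy : 0 < y ⬝ᵥ y := hdot y hyne
        have hle : y ⬝ᵥ B *ᵥ y ≤ lam * (y ⬝ᵥ y) := aux_rayleigh_le B hBH y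
        rw [wnorm, wnorm, ← key1, ← key2, ← hy]
        rw [div_le_iff₀ (by positivity)]
        calc Real.sqrt (y ⬝ᵥ B *ᵥ y) ≤ Real.sqrt (lam * (y ⬝ᵥ y)) :=
              Real.sqrt_le_sqrt hle
          _ = Real.sqrt lam * Real.sqrt (y ⬝ᵥ y) := Real.sqrt_mul hlam0 _
    rw [opnorm, hgreat.csSup_eq, Real.sq_sqrt hlam0, heig]
end
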